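/- Let u : ℂ → ℂⁿ be a C¹ map, let v : ℂ → ℂⁿ be a C¹ map with compact support contained in D, and let τ > 0. Then ∫_D ⟨∂u/∂z̄(z), v(z)⟩ e^{τφ(z)} dA = − ∫_D ⟨u(z), ∂v/∂z(z) + (τ/2)·φ'(z)·v(z)⟩ e^{τφ(z)} dA, where ⟨·,·⟩ is the Hermitian inner product on ℂⁿ, φ'(x+iy) = 1 + x, and dA is Lebesgue measure on ℂ. -/

import Mathlib

open Complex MeasureTheory Metric Filter Topology
open scoped InnerProductSpace

/-- The Wirtinger derivative `∂u/∂z̄ = (1/2)(∂u/∂x + i • ∂u/∂y)`. -/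
noncomputable def dbar {E : Type*} [NormedAddCommGroup E] [NormedSpace ℂ E]
    (u : ℂ → E) (z : ℂ) : E :=
  (2⁻¹ : ℝ) • (fderiv ℝ u z 1 + Complex.I • fderiv ℝ u z Complex.I)

/-- The Wirtinger derivative `∂u/∂z = (1/2)(∂u/∂x - i • ∂u/∂y)`. -/
noncomputable def dz {E : Type*} [NormedAddCommGroup E] [NormedSpace ℂ E]
    (u : ℂ → E) (z : ℂ) : E :=
  (2⁻¹ : ℝ) • (fderiv ℝ u z 1 - Complex.I • fderiv ℝ u z Complex.I)

/-- The weight `φ(x+iy) = x + x²/2`. -/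
noncomputable def phi (z : ℂ) : ℝ := z.re + z.re ^ 2 / 2

lemma hasFDerivAt_phi (z : ℂ) :
    HasFDerivAt phi ((1 + z.re) • Complex.reCLM) z := by
  have h1 : HasFDerivAt (fun w : ℂ => w.re) Complex.reCLM z := Complex.reCLM.hasFDerivAt
  have h2 := (h1.mul h1).const_mul (2⁻¹ : ℝ)
  have h3 := h1.add h2
  convert h3 using 1
  all_goals try rfl
  · ext w; simp [phi]; ring
  · ext w
    simp only [ContinuousLinearMap.add_apply, ContinuousLinearMap.smul_apply,
      ContinuousLinearMap.coe_smul', Pi.smul_apply, Complex.reCLM_apply, smul_eq_mul]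
    ring

lemma key {n : ℕ} {u v : ℂ → EuclideanSpace ℂ (Fin n)} (hu : Differentiable ℝ u)
    (hv : Differentiable ℝ v) (τ : ℝ) (z : ℂ) :
    fderiv ℝ (fun w => ⟪u w, v w⟫_ℂ * (Real.exp (τ * phi w) : ℂ)) z 1
      - Complex.I * fderiv ℝ (fun w => ⟪u w, v w⟫_ℂ * (Real.exp (τ * phi w) : ℂ)) z Complex.I
    = 2 * (⟪dbar u z, v z⟫_ℂ * (Real.exp (τ * phi z) : ℂ)
        + ⟪u z, dz v z + ((τ / 2) * (1 + z.re)) • v z⟫_ℂ * (Real.exp (τ * phi z) : ℂ)) := by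
  have hu' := (hu z).hasFDerivAt
  have hv' := (hv z).hasFDerivAt
  have hinner := hu'.inner ℂ hv'
  have hφ := hasFDerivAt_phi z
  have hexp : HasFDerivAt (fun w : ℂ => Real.exp (τ * phi w))
      (Real.exp (τ * phi z) • (τ • ((1 + z.re) • Complex.reCLM))) z :=
    (hφ.const_mul τ).exp
  have he : HasFDerivAt (fun w : ℂ => (Real.exp (τ * phi w) : ℂ))
      (Complex.ofRealCLM.comp (Real.exp (τ * phi z) • (τ • ((1 + z.re) • Complex.reCLM)))) z :=
    Complex.ofRealCLM.hasFDerivAt.comp z hexp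
  have hg := hinner.mul he
  have hb : ⟪dbar u z, v z⟫_ℂ
      = (2⁻¹ : ℂ) * (⟪fderiv ℝ u z 1, v z⟫_ℂ - Complex.I * ⟪fderiv ℝ u z Complex.I, v z⟫_ℂ) := by
    rw [dbar, RCLike.real_smul_eq_coe_smul (K := ℂ)]
    simp only [inner_smul_left, inner_add_left, map_inv₀, Complex.conj_I,
      Complex.coe_algebraMap, Complex.conj_ofReal]
    push_cast
    ring
  have hz : ⟪u z, dz v z⟫_ℂ
      = (2⁻¹ : ℂ) * (⟪u z, fderiv ℝ v z 1⟫_ℂ - Complex.I * ⟪u z, fderiv ℝ v z Complex.I⟫_ℂ) := by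
    rw [dz, RCLike.real_smul_eq_coe_smul (K := ℂ)]
    simp only [inner_smul_right, inner_sub_right, Complex.coe_algebraMap]
    push_cast
    ring
  have hc : ⟪u z, ((τ / 2) * (1 + z.re)) • v z⟫_ℂ
      = (((τ / 2) * (1 + z.re) : ℝ) : ℂ) * ⟪u z, v z⟫_ℂ := by
    rw [RCLike.real_smul_eq_coe_smul (K := ℂ), inner_smul_right]
    norm_cast
  rw [HasFDerivAt.fderiv (f := fun w => ⟪u w, v w⟫_ℂ * (Real.exp (τ * phi w) : ℂ)) hg]
  simp only [inner_add_right, hb, hz, hc,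
    ContinuousLinearMap.add_apply, ContinuousLinearMap.smul_apply,
    ContinuousLinearMap.comp_apply, ContinuousLinearMap.prod_apply, fderivInnerCLM_apply,
    Complex.ofRealCLM_apply, Complex.reCLM_apply, Complex.I_re, Complex.one_re, smul_eq_mul]
  push_cast
  ring

lemma integral_fderiv_apply_eq_zero {g : ℂ → ℂ} (hg : ContDiff ℝ 1 g)
    (hsupp : HasCompactSupport g) (w : ℂ) :
    ∫ z : ℂ, fderiv ℝ g z w = 0 := by
  have hg' : Continuous fun z => fderiv ℝ g z w :=
    (hg.continuous_fderiv one_ne_zero).clm_apply continuous_const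
  have hcs : HasCompactSupport fun z => fderiv ℝ g z w := hsupp.fderiv_apply ℝ w
  have h := integral_mul_fderiv_eq_neg_fderiv_mul_of_integrable (μ := volume)
    (f := fun _ : ℂ => (1 : ℂ)) (g := g) (v := w)
    (by simp [fderiv_const])
    (by simpa using hg'.integrable_of_hasCompactSupport hcs)
    (by simpa using (hg.continuous).integrable_of_hasCompactSupport hsupp)
    (fun x _ => differentiableAt_const _) (fun x _ => hg.differentiable one_ne_zero x)
  simpa [fderiv_const] using h


/-- integration by parts with weight: for `u : ℂ → ℂⁿ` of class `C¹`,
`v : ℂ → ℂⁿ` of class `C¹` compactly supported in the unit disc, and `τ > 0`,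
`∫ ⟨∂u/∂z̄, v⟩ e^{τφ} = -∫ ⟨u, ∂v/∂z + (τ/2)·φ'·v⟩ e^{τφ}`, with `φ'(x+iy) = 1 + x`. -/
theorem weighted_integration_by_parts (n : ℕ)
    (u v : ℂ → EuclideanSpace ℂ (Fin n))
    (hu : ContDiff ℝ 1 u)
    (hv : ContDiff ℝ 1 v) (hsupp : HasCompactSupport v)
    (hsub : tsupport v ⊆ ball (0 : ℂ) 1) (τ : ℝ) (hτ : 0 < τ) :
    ∫ z in ball (0 : ℂ) 1,
        ⟪dbar u z, v z⟫_ℂ * (Real.exp (τ * phi z) : ℂ)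
      = -∫ z in ball (0 : ℂ) 1,
          ⟪u z, dz v z + ((τ / 2) * (1 + z.re)) • v z⟫_ℂ
            * (Real.exp (τ * phi z) : ℂ) := by
  set e : ℂ → ℂ := fun z => (Real.exp (τ * phi z) : ℂ) with he_def
  set A : ℂ → ℂ := fun z => ⟪dbar u z, v z⟫_ℂ * e z with hA_def
  set B : ℂ → ℂ := fun z => ⟪u z, dz v z + ((τ / 2) * (1 + z.re)) • v z⟫_ℂ * e z with hB_def
  set g : ℂ → ℂ := fun w => ⟪u w, v w⟫_ℂ * e w with hg_def
  -- continuity ingredients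
  have hre : ContDiff ℝ 1 (fun z : ℂ => z.re) := Complex.reCLM.contDiff
  have hφC1 : ContDiff ℝ 1 phi := hre.add ((hre.pow 2).div_const 2)
  have heC1 : ContDiff ℝ 1 e :=
    Complex.ofRealCLM.contDiff.comp
      ((Real.contDiff_exp.of_le le_top).comp (contDiff_const.mul hφC1))
  have hgC1 : ContDiff ℝ 1 g := (hu.inner ℂ hv).mul heC1
  have cu : Continuous (fderiv ℝ u) := hu.continuous_fderiv one_ne_zero
  have cv : Continuous (fderiv ℝ v) := hv.continuous_fderiv one_ne_zero
  have cdbar : Continuous (dbar u) := by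
    unfold dbar
    exact ((cu.clm_apply continuous_const).add
      ((cu.clm_apply continuous_const).const_smul Complex.I)).const_smul _
  have cdz : Continuous (dz v) := by
    unfold dz
    exact ((cv.clm_apply continuous_const).sub
      ((cv.clm_apply continuous_const).const_smul Complex.I)).const_smul _
  have cA : Continuous A :=
    (cdbar.inner (hv.continuous)).mul heC1.continuous
  have cB : Continuous B :=
    ((hu.continuous.inner (cdz.add
      ((continuous_const.mul (continuous_const.add Complex.continuous_re)).smul
        hv.continuous)))).mul heC1.continuous
  -- vanishing outside tsupport v
  have hvanA : ∀ z, z ∉ tsupport v → A z = 0 := by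
    intro z hz
    simp [hA_def, image_eq_zero_of_notMem_tsupport hz]
  have hvanB : ∀ z, z ∉ tsupport v → B z = 0 := by
    intro z hz
    have h1 : v z = 0 := image_eq_zero_of_notMem_tsupport hz
    have h2 : fderiv ℝ v z = 0 := by
      by_contra h
      exact hz (support_fderiv_subset ℝ (f := v) h)
    simp [hB_def, dz, h1, h2]
  have hvanG : ∀ z, z ∉ tsupport v → g z = 0 := by
    intro z hz
    simp [hg_def, image_eq_zero_of_notMem_tsupport hz]
  have hsuppA : HasCompactSupport A :=
    hsupp.mono' (fun z hz => by by_contra h; exact hz (hvanA z h))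
  have hsuppB : HasCompactSupport B :=
    hsupp.mono' (fun z hz => by by_contra h; exact hz (hvanB z h))
  have hsuppG : HasCompactSupport g :=
    hsupp.mono' (fun z hz => by by_contra h; exact hz (hvanG z h))
  have intA : Integrable A := cA.integrable_of_hasCompactSupport hsuppA
  have intB : Integrable B := cB.integrable_of_hasCompactSupport hsuppB
  -- set integrals equal to full integrals
  have hballA : ∫ z in ball (0 : ℂ) 1, A z = ∫ z, A z :=
    setIntegral_eq_integral_of_forall_compl_eq_zero
      (fun z hz => hvanA z (fun h => hz (hsub h)))
  have hballB : ∫ z in ball (0 : ℂ) 1, B z = ∫ z, B z :=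
    setIntegral_eq_integral_of_forall_compl_eq_zero
      (fun z hz => hvanB z (fun h => hz (hsub h)))
  -- the key pointwise identity
  have hkey : ∀ z, A z + B z
      = (2⁻¹ : ℂ) * (fderiv ℝ g z 1 - Complex.I * fderiv ℝ g z Complex.I) := by
    intro z
    have := key (hu.differentiable one_ne_zero) (hv.differentiable one_ne_zero) τ z
    rw [hg_def]
    rw [show (fun w => ⟪u w, v w⟫_ℂ * e w) = fun w => ⟪u w, v w⟫_ℂ * (Real.exp (τ * phi w) : ℂ)
      from rfl, this]
    simp [hA_def, hB_def, he_def]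
  -- integral of the full-space sum is zero
  have hzero : (∫ z, A z) + ∫ z, B z = 0 := by
    rw [← integral_add intA intB]
    have : ∫ z, (A z + B z)
        = (2⁻¹ : ℂ) * ((∫ z, fderiv ℝ g z 1) - Complex.I * ∫ z, fderiv ℝ g z Complex.I) := by
      simp_rw [hkey]
      rw [integral_const_mul]
      congr 1
      have int1 : Integrable (fun z : ℂ => fderiv ℝ g z 1) :=
        ((hgC1.continuous_fderiv one_ne_zero).clm_apply continuous_const).integrable_of_hasCompactSupport
          (hsuppG.fderiv_apply ℝ 1)
      have hIcs : HasCompactSupport (fun z : ℂ => Complex.I * fderiv ℝ g z Complex.I) := by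
        apply (hsuppG.fderiv_apply ℝ Complex.I).mono'
        intro z hz
        apply subset_closure
        simp only [Function.mem_support] at hz ⊢
        intro h
        exact hz (by rw [h, mul_zero])
      have intI : Integrable (fun z : ℂ => Complex.I * fderiv ℝ g z Complex.I) :=
        (continuous_const.mul ((hgC1.continuous_fderiv one_ne_zero).clm_apply
          continuous_const)).integrable_of_hasCompactSupport hIcs
      rw [integral_sub int1 intI, integral_const_mul]
    rw [this, integral_fderiv_apply_eq_zero hgC1 hsuppG 1,
      integral_fderiv_apply_eq_zero hgC1 hsuppG Complex.I]
    simp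
  rw [hballA, hballB]
  exact eq_neg_of_add_eq_zero_left hzero
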